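/- Let p be an odd prime with 2^{p−1} ≢ 1 (mod p^2), and S(x) = Σ_{t ∈ C_1^{(2p^n)}} x^t over F_2 the generating polynomial of the sequence s^∞. If α_n is a primitive p^n-th root of unity over F_2 and 2 ≡ g^u (mod p^n), then for every a ∈ Z/p^n Z, S(α_n^a) = 1 + T_b^{(p^n)}(α_n^a) + T_{b+u}^{(p^n)}(α_n^a). -/
import Mathlib


open Polynomial Finset

noncomputable section

/-- Generalized cyclotomic class `D_i` of order `d` modulo `m`,
    given by the coset `g^i ⟨g^d⟩` with `e` elements. -/
def Dset (m g d e i : ℕ) : Finset (ZMod m) :=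
  (Finset.range e).image (fun t => (g : ZMod m) ^ (i + t * d))

/-- `E_i^{(m)}` evaluated at `α`. -/
def Esum {F : Type*} [Field F] (m g d e i : ℕ) (α : F) : F :=
  ∑ t ∈ Dset m g d e i, α ^ t.val

/-- `H_k^{(p^j)}` evaluated at `α`. -/
def Hsum {F : Type*} [Field F] (p g e f j k : ℕ) (α : F) : F :=
  ∑ i ∈ Finset.range (p ^ (j - 1) * f / 2),
    Esum (p ^ j) g (p ^ (j - 1) * f) e ((i + k) % (p ^ (j - 1) * f)) α

/-- `T_k^{(p^m)}` evaluated at `α`. -/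
def Tsum {F : Type*} [Field F] (p g e f m k : ℕ) (α : F) : F :=
  ∑ j ∈ Finset.Icc 1 m, Hsum p g e f j k (α ^ p ^ (m - j))

/-- The set `C_1^{(2p^n)}`. -/
def Cone (p g e f b n : ℕ) : Finset (ZMod (2 * p ^ n)) :=
  insert 0 <| (Finset.Icc 1 n).biUnion fun j =>
    (Finset.range (p ^ (j - 1) * f / 2)).biUnion fun i =>
      (Dset (2 * p ^ j) g (p ^ (j - 1) * f) e ((i + b) % (p ^ (j - 1) * f))).image
          (fun x => ((p ^ (n - j) * x.val : ℕ) : ZMod (2 * p ^ n))) ∪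
      (Dset (2 * p ^ j) g (p ^ (j - 1) * f) e ((i + b) % (p ^ (j - 1) * f))).image
          (fun x => ((2 * p ^ (n - j) * x.val : ℕ) : ZMod (2 * p ^ n)))

/-- The set `C_0^{(2p^n)}`. -/
def Czero (p g e f b n : ℕ) : Finset (ZMod (2 * p ^ n)) :=
  insert ((p ^ n : ℕ) : ZMod (2 * p ^ n)) <| (Finset.Icc 1 n).biUnion fun j =>
    (Finset.Ico (p ^ (j - 1) * f / 2) (p ^ (j - 1) * f)).biUnion fun i =>
      (Dset (2 * p ^ j) g (p ^ (j - 1) * f) e ((i + b) % (p ^ (j - 1) * f))).image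
          (fun x => ((p ^ (n - j) * x.val : ℕ) : ZMod (2 * p ^ n))) ∪
      (Dset (2 * p ^ j) g (p ^ (j - 1) * f) e ((i + b) % (p ^ (j - 1) * f))).image
          (fun x => ((2 * p ^ (n - j) * x.val : ℕ) : ZMod (2 * p ^ n)))

/-- The set `C̃_1^{(2p^n)}`. -/
def Ctilde1 (p g e f b n : ℕ) : Finset (ZMod (2 * p ^ n)) :=
  insert 0 <| (Finset.Icc 1 n).biUnion fun j =>
    ((Finset.range (p ^ (j - 1) * f / 2)).biUnion fun i =>
      (Dset (2 * p ^ j) g (p ^ (j - 1) * f) e ((i + b) % (p ^ (j - 1) * f))).image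
          (fun x => ((p ^ (n - j) * x.val : ℕ) : ZMod (2 * p ^ n)))) ∪
    ((Finset.Ico (p ^ (j - 1) * f / 2) (p ^ (j - 1) * f)).biUnion fun i =>
      (Dset (2 * p ^ j) g (p ^ (j - 1) * f) e ((i + b) % (p ^ (j - 1) * f))).image
          (fun x => ((2 * p ^ (n - j) * x.val : ℕ) : ZMod (2 * p ^ n))))

/-- Evaluation of the generating polynomial `S` of `s^∞` at `α`. -/
def Seval {F : Type*} [Field F] (p g e f b n : ℕ) (α : F) : F :=
  ∑ t ∈ Cone p g e f b n, α ^ t.val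

/-- Evaluation of the generating polynomial `S̃` of `s̃^∞` at `α`. -/
def Steval {F : Type*} [Field F] (p g e f b n : ℕ) (α : F) : F :=
  ∑ t ∈ Ctilde1 p g e f b n, α ^ t.val

/-- The binary sequence `s^∞` of period `2p^n`. -/
def seqS (p g e f b n : ℕ) : ℕ → ZMod 2 :=
  fun i => if (i : ZMod (2 * p ^ n)) ∈ Cone p g e f b n then 1 else 0

/-- The binary sequence `s̃^∞` of period `2p^n`. -/
def seqStilde (p g e f b n : ℕ) : ℕ → ZMod 2 :=
  fun i => if (i : ZMod (2 * p ^ n)) ∈ Ctilde1 p g e f b n then 1 else 0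

/-- Generating polynomial of one period of a binary sequence. -/
def genPoly (N : ℕ) (s : ℕ → ZMod 2) : Polynomial (ZMod 2) :=
  ∑ k ∈ Finset.range N, Polynomial.C (s k) * Polynomial.X ^ k

/-- Linear complexity: the length of a shortest linear recurrence generating `s`. -/
def linComplexity (s : ℕ → ZMod 2) : ℕ :=
  sInf {L | ∃ c : Fin L → ZMod 2, ∀ n, s (n + L) = ∑ i : Fin L, c i * s (n + i)}

lemma aux_pow_mod {F : Type*} [Monoid F] {β : F} {N : ℕ} (hβ : β ^ N = 1) {m1 m2 : ℕ}
    (h : m1 ≡ m2 [MOD N]) : β ^ m1 = β ^ m2 := by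
  have key : ∀ m : ℕ, β ^ m = β ^ (m % N) := by
    intro m
    conv_lhs => rw [← Nat.div_add_mod m N]
    rw [pow_add, pow_mul, hβ, one_pow, one_mul]
  rw [key m1, key m2, show m1 % N = m2 % N from h]

lemma aux_orderOf_cast {g m k : ℕ} [NeZero k] (h : m ∣ k)
    (hg : orderOf ((g : ℕ) : ZMod k) = Nat.totient k) :
    orderOf ((g : ℕ) : ZMod m) = Nat.totient m := by
  have hm : NeZero m := ⟨fun h0 => NeZero.ne k (eq_zero_of_zero_dvd (h0 ▸ h))⟩
  have htk : 0 < Nat.totient k := Nat.totient_pos.2 (Nat.pos_of_ne_zero (NeZero.ne k))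
  have hgu : IsUnit ((g : ℕ) : ZMod k) := by
    refine IsUnit.of_pow_eq_one (n := Nat.totient k) ?_ htk.ne'
    rw [← hg]; exact pow_orderOf_eq_one _
  obtain ⟨u, hu⟩ := hgu
  have hou : orderOf u = Nat.card (ZMod k)ˣ := by
    rw [← orderOf_units, hu, hg, Nat.card_eq_fintype_card, ZMod.card_units_eq_totient]
  have hutop : Subgroup.zpowers u = ⊤ := by
    rw [← Subgroup.card_eq_iff_eq_top, Nat.card_zpowers, hou]
  set v := ZMod.unitsMap h u with hv
  have hvtop : Subgroup.zpowers v = ⊤ := by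
    rw [hv, ← MonoidHom.map_zpowers, hutop,
      Subgroup.map_top_of_surjective _ (ZMod.unitsMap_surjective h)]
  have hov : orderOf v = Nat.card (ZMod m)ˣ :=
    orderOf_eq_card_of_forall_mem_zpowers (fun x => hvtop ▸ Subgroup.mem_top x)
  have hvval : (v : ZMod m) = ((g : ℕ) : ZMod m) := by
    rw [hv, ZMod.unitsMap_def]
    simp only [Units.coe_map, MonoidHom.coe_coe, hu]
    exact map_natCast (ZMod.castHom h (ZMod m)) g
  rw [← hvval, orderOf_units, hov, Nat.card_eq_fintype_card, ZMod.card_units_eq_totient]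

lemma aux_isUnit {m g D : ℕ} (hord : orderOf ((g : ℕ) : ZMod m) = D) (hD : 0 < D) :
    IsUnit ((g : ℕ) : ZMod m) := by
  refine IsUnit.of_pow_eq_one (n := D) ?_ hD.ne'
  rw [← hord]; exact pow_orderOf_eq_one _

lemma aux_pow_iff {m g D : ℕ} (hord : orderOf ((g : ℕ) : ZMod m) = D) (hD : 0 < D)
    (s t : ℕ) : ((g : ℕ) : ZMod m) ^ s = ((g : ℕ) : ZMod m) ^ t ↔ s ≡ t [MOD D] := by
  obtain ⟨u, hu⟩ := aux_isUnit hord hD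
  rw [← hu, ← Units.val_pow_eq_pow_val, ← Units.val_pow_eq_pow_val]
  rw [show (((u ^ s : (ZMod m)ˣ) : ZMod m) = ((u ^ t : (ZMod m)ˣ) : ZMod m)) ↔ u ^ s = u ^ t
    from ⟨fun hh => Units.ext hh, fun hh => by rw [hh]⟩]
  rw [pow_eq_pow_iff_modEq, show orderOf u = D by rw [← orderOf_units, hu, hord]]


lemma mem_Dset_iff {m g d e c : ℕ} (hord : orderOf ((g : ℕ) : ZMod m) = e * d)
    (he : 0 < e) (hd : 0 < d) {x : ZMod m} :
    x ∈ Dset m g d e c ↔ ∃ k, k % d = c % d ∧ x = ((g : ℕ) : ZMod m) ^ k := by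
  have hD : 0 < e * d := Nat.mul_pos he hd
  constructor
  · rintro hx
    rw [Dset, mem_image] at hx
    obtain ⟨t, ht, rfl⟩ := hx
    exact ⟨c + t * d, by simp [Nat.add_mul_mod_self_right], rfl⟩
  · rintro ⟨k, hk, rfl⟩
    rw [Dset, mem_image]
    refine ⟨(k / d + (e - c / d % e)) % e, mem_range.2 (Nat.mod_lt _ he), ?_⟩
    rw [aux_pow_iff hord hD]
    have h1 : c / d + (k / d + (e - c / d % e)) % e ≡ k / d [MOD e] := by
      calc c / d + (k / d + (e - c / d % e)) % e
          ≡ c / d + (k / d + (e - c / d % e)) [MOD e] :=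
            Nat.ModEq.add_left _ (Nat.mod_modEq _ e)
        _ = k / d + (c / d + (e - c / d % e)) := by ring
        _ ≡ k / d + (c / d % e + (e - c / d % e)) [MOD e] :=
            Nat.ModEq.add_left _ (Nat.ModEq.add_right _ (Nat.mod_modEq _ e).symm)
        _ = k / d + e := by
            rw [Nat.add_sub_cancel' (le_of_lt (Nat.mod_lt _ he))]
        _ ≡ k / d + 0 [MOD e] := Nat.ModEq.add_left _ (Nat.modEq_zero_iff_dvd.2 dvd_rfl)
        _ = k / d := by ring
    have h2 := Nat.ModEq.mul_right' d h1
    have h3 : (c / d + (k / d + (e - c / d % e)) % e) * d + c % d ≡ k / d * d + c % d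
        [MOD e * d] := Nat.ModEq.add_right _ h2
    have hc := Nat.div_add_mod' c d
    have hkk := Nat.div_add_mod' k d
    calc c + (k / d + (e - c / d % e)) % e * d
        = (c / d + (k / d + (e - c / d % e)) % e) * d + c % d := by
          rw [add_mul]; omega
      _ ≡ k / d * d + c % d [MOD e * d] := h3
      _ = k := by rw [← hk]; omega

lemma Dset_congr {m g d e : ℕ} (hord : orderOf ((g : ℕ) : ZMod m) = e * d)
    (he : 0 < e) (hd : 0 < d) {c1 c2 : ℕ} (h : c1 % d = c2 % d) :
    Dset m g d e c1 = Dset m g d e c2 := by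
  ext x
  rw [mem_Dset_iff hord he hd, mem_Dset_iff hord he hd, h]

lemma Dset_sum {F : Type*} [AddCommMonoid F] {m g d e : ℕ}
    (hord : orderOf ((g : ℕ) : ZMod m) = e * d) (he : 0 < e) (hd : 0 < d)
    (c : ℕ) (fn : ZMod m → F) :
    ∑ x ∈ Dset m g d e c, fn x = ∑ t ∈ range e, fn (((g : ℕ) : ZMod m) ^ (c + t * d)) := by
  rw [Dset]
  apply Finset.sum_image
  intro t1 h1 t2 h2 hgg
  rw [aux_pow_iff hord (Nat.mul_pos he hd)] at hgg
  have h3 := Nat.ModEq.mul_right_cancel' hd.ne' (Nat.ModEq.add_left_cancel' c hgg)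
  rw [Nat.ModEq, Nat.mod_eq_of_lt (mem_range.1 h1), Nat.mod_eq_of_lt (mem_range.1 h2)] at h3
  exact h3

lemma Dset_coprime {m g d e c : ℕ} (hord : orderOf ((g : ℕ) : ZMod m) = e * d)
    (he : 0 < e) (hd : 0 < d) {x : ZMod m} (hx : x ∈ Dset m g d e c) :
    Nat.Coprime x.val m := by
  obtain ⟨k, _, rfl⟩ := (mem_Dset_iff hord he hd).1 hx
  obtain ⟨u, hu⟩ := aux_isUnit hord (Nat.mul_pos he hd)
  rw [← hu, ← Units.val_pow_eq_pow_val]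
  exact ZMod.val_coe_unit_coprime _

lemma cast_mod_dvd (a m q : ℕ) (h : q ∣ m) : ((a % m : ℕ) : ZMod q) = (a : ZMod q) := by
  conv_rhs => rw [← Nat.div_add_mod a m]
  push_cast
  rw [(ZMod.natCast_eq_zero_iff m q).2 h, zero_mul, zero_add]

lemma sumA {F : Type*} [Field F] (p e f n g : ℕ) (hp : p.Prime) (hodd : Odd p)
    (hef : p - 1 = e * f) (he : 0 < e) (hf : 0 < f)
    (hg : orderOf ((g : ℕ) : ZMod (2 * p ^ n)) = Nat.totient (2 * p ^ n))
    (β : F) (hβ : β ^ p ^ n = 1) (j : ℕ) (hj1 : 1 ≤ j) (hjn : j ≤ n) (c : ℕ) :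
    ∑ t ∈ (Dset (2 * p ^ j) g (p ^ (j - 1) * f) e c).image
        (fun x => ((p ^ (n - j) * x.val : ℕ) : ZMod (2 * p ^ n))),
      β ^ t.val
      = Esum (p ^ j) g (p ^ (j - 1) * f) e c (β ^ p ^ (n - j)) := by
  have hp0 : 0 < p := hp.pos
  have hp1 : 1 < p := hp.one_lt
  haveI : NeZero (2 * p ^ n) := ⟨by positivity⟩
  haveI : NeZero (2 * p ^ j) := ⟨by positivity⟩
  haveI : NeZero (p ^ j) := ⟨by positivity⟩
  set d := p ^ (j - 1) * f with hd_def
  have hd : 0 < d := by positivity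
  have htot1 : Nat.totient (p ^ j) = e * d := by
    rw [Nat.totient_prime_pow hp hj1, hef, hd_def]; ring
  have htot2 : Nat.totient (2 * p ^ j) = e * d := by
    rw [Nat.totient_mul (Nat.Coprime.pow_right _ (Nat.coprime_two_left.mpr hodd)), Nat.totient_two, one_mul, htot1]
  have hord2 : orderOf ((g : ℕ) : ZMod (2 * p ^ j)) = e * d :=
    htot2 ▸ aux_orderOf_cast (mul_dvd_mul_left 2 (pow_dvd_pow p hjn)) hg
  have hord1 : orderOf ((g : ℕ) : ZMod (p ^ j)) = e * d :=
    htot1 ▸ aux_orderOf_cast ((pow_dvd_pow p hjn).trans (dvd_mul_left _ 2)) hg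
  have hpow : p ^ (n - j) * p ^ j = p ^ n := by
    rw [← pow_add]; congr 1; omega
  have hlt : ∀ x : ZMod (2 * p ^ j), p ^ (n - j) * x.val < 2 * p ^ n := by
    intro x
    calc p ^ (n - j) * x.val < p ^ (n - j) * (2 * p ^ j) :=
          (Nat.mul_lt_mul_left (a := p ^ (n - j)) (by positivity)).2 (ZMod.val_lt x)
      _ = 2 * p ^ n := by rw [← hpow]; ring
  rw [Finset.sum_image ?inj]
  case inj =>
    intro x1 _ x2 _ heq
    have h1 := congrArg ZMod.val heq
    rw [ZMod.val_natCast, ZMod.val_natCast, Nat.mod_eq_of_lt (hlt x1),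
      Nat.mod_eq_of_lt (hlt x2)] at h1
    exact ZMod.val_injective _ (Nat.eq_of_mul_eq_mul_left (by positivity) h1)
  rw [Esum, Dset_sum hord2 he hd, Dset_sum hord1 he hd]
  refine Finset.sum_congr rfl fun t _ => ?_
  rw [ZMod.val_natCast, Nat.mod_eq_of_lt (hlt _), ← pow_mul]
  apply aux_pow_mod hβ
  have hv : (((g : ℕ) : ZMod (2 * p ^ j)) ^ (c + t * d)).val
      ≡ (((g : ℕ) : ZMod (p ^ j)) ^ (c + t * d)).val [MOD p ^ j] := by
    rw [← Nat.cast_pow, ← Nat.cast_pow, ZMod.val_natCast, ZMod.val_natCast]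
    calc g ^ (c + t * d) % (2 * p ^ j) ≡ g ^ (c + t * d) [MOD p ^ j] :=
          Nat.ModEq.of_dvd (dvd_mul_left _ 2) (Nat.mod_modEq _ _)
      _ ≡ g ^ (c + t * d) % (p ^ j) [MOD p ^ j] := (Nat.mod_modEq _ _).symm
  have := Nat.ModEq.mul_left' (p ^ (n - j)) hv
  rwa [hpow] at this

lemma sumB {F : Type*} [Field F] (p e f n g u : ℕ) (hp : p.Prime) (hodd : Odd p)
    (hef : p - 1 = e * f) (he : 0 < e) (hf : 0 < f)
    (hg : orderOf ((g : ℕ) : ZMod (2 * p ^ n)) = Nat.totient (2 * p ^ n))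
    (β : F) (hβ : β ^ p ^ n = 1) (j : ℕ) (hj1 : 1 ≤ j) (hjn : j ≤ n)
    (huj : (2 : ZMod (p ^ j)) = ((g : ℕ) : ZMod (p ^ j)) ^ u)
    (c c' : ℕ) (hc' : c' % (p ^ (j - 1) * f) = (u + c) % (p ^ (j - 1) * f)) :
    ∑ t ∈ (Dset (2 * p ^ j) g (p ^ (j - 1) * f) e c).image
        (fun x => ((2 * p ^ (n - j) * x.val : ℕ) : ZMod (2 * p ^ n))),
      β ^ t.val
      = Esum (p ^ j) g (p ^ (j - 1) * f) e c' (β ^ p ^ (n - j)) := by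
  have hp0 : 0 < p := hp.pos
  have hp1 : 1 < p := hp.one_lt
  haveI : NeZero (2 * p ^ n) := ⟨by positivity⟩
  haveI : NeZero (2 * p ^ j) := ⟨by positivity⟩
  haveI : NeZero (p ^ j) := ⟨by positivity⟩
  set d := p ^ (j - 1) * f with hd_def
  have hd : 0 < d := by positivity
  have htot1 : Nat.totient (p ^ j) = e * d := by
    rw [Nat.totient_prime_pow hp hj1, hef, hd_def]; ring
  have htot2 : Nat.totient (2 * p ^ j) = e * d := by
    rw [Nat.totient_mul (Nat.Coprime.pow_right _ (Nat.coprime_two_left.mpr hodd)),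
      Nat.totient_two, one_mul, htot1]
  have hord2 : orderOf ((g : ℕ) : ZMod (2 * p ^ j)) = e * d :=
    htot2 ▸ aux_orderOf_cast (mul_dvd_mul_left 2 (pow_dvd_pow p hjn)) hg
  have hord1 : orderOf ((g : ℕ) : ZMod (p ^ j)) = e * d :=
    htot1 ▸ aux_orderOf_cast ((pow_dvd_pow p hjn).trans (dvd_mul_left _ 2)) hg
  have hpow : p ^ (n - j) * p ^ j = p ^ n := by
    rw [← pow_add]; congr 1; omega
  have hpjodd : p ^ j % 2 = 1 := Nat.odd_iff.mp hodd.pow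
  rw [Finset.sum_image ?inj]
  case inj =>
    intro x1 hx1 x2 hx2 heq
    rw [ZMod.natCast_eq_natCast_iff] at heq
    have hcan : x1.val ≡ x2.val [MOD p ^ j] := by
      apply Nat.ModEq.mul_left_cancel' (c := 2 * p ^ (n - j)) (by positivity)
      have h2 : 2 * p ^ (n - j) * (p ^ j) = 2 * p ^ n := by rw [← hpow]; ring
      rw [h2]
      calc 2 * p ^ (n - j) * x1.val = 2 * p ^ (n - j) * x1.val := rfl
        _ ≡ 2 * p ^ (n - j) * x2.val [MOD 2 * p ^ n] := heq
    have ho1 : x1.val % 2 = 1 :=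
      Nat.odd_iff.mp ((Dset_coprime hord2 he hd hx1).coprime_dvd_right
        (dvd_mul_right 2 _)).odd_of_right
    have ho2 : x2.val % 2 = 1 :=
      Nat.odd_iff.mp ((Dset_coprime hord2 he hd hx2).coprime_dvd_right
        (dvd_mul_right 2 _)).odd_of_right
    have hl1 : x1.val < 2 * p ^ j := ZMod.val_lt x1
    have hl2 : x2.val < 2 * p ^ j := ZMod.val_lt x2
    have e1 : p ^ j * (x1.val / p ^ j) + x1.val % p ^ j = x1.val := Nat.div_add_mod _ _
    have e2 : p ^ j * (x2.val / p ^ j) + x2.val % p ^ j = x2.val := Nat.div_add_mod _ _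
    have hq1 : x1.val / p ^ j < 2 := (Nat.div_lt_iff_lt_mul (by positivity)).2 (by omega)
    have hq2 : x2.val / p ^ j < 2 := (Nat.div_lt_iff_lt_mul (by positivity)).2 (by omega)
    have hmm : x1.val % p ^ j = x2.val % p ^ j := hcan
    apply ZMod.val_injective
    set q1 := x1.val / p ^ j with hh1
    set q2 := x2.val / p ^ j with hh2
    interval_cases q1 <;> interval_cases q2 <;> omega
  rw [Esum, Dset_congr hord1 he hd hc', Dset_sum hord2 he hd, Dset_sum hord1 he hd]
  refine Finset.sum_congr rfl fun t _ => ?_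
  rw [ZMod.val_natCast, ← pow_mul]
  apply aux_pow_mod hβ
  have h2v : 2 * (((g : ℕ) : ZMod (2 * p ^ j)) ^ (c + t * d)).val
      ≡ (((g : ℕ) : ZMod (p ^ j)) ^ (u + c + t * d)).val [MOD p ^ j] := by
    rw [← ZMod.natCast_eq_natCast_iff]
    push_cast
    rw [ZMod.natCast_val, ZMod.natCast_val, ZMod.cast_id]
    have hv2 : (ZMod.cast ((((g : ℕ) : ZMod (2 * p ^ j))) ^ (c + t * d)) : ZMod (p ^ j))
        = ((g : ℕ) : ZMod (p ^ j)) ^ (c + t * d) := by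
      rw [← ZMod.castHom_apply (h := dvd_mul_left (p ^ j) 2), map_pow, map_natCast]
    rw [hv2, huj, ← pow_add, add_assoc]
  calc (2 * p ^ (n - j) * (((g : ℕ) : ZMod (2 * p ^ j)) ^ (c + t * d)).val) % (2 * p ^ n)
      ≡ 2 * p ^ (n - j) * (((g : ℕ) : ZMod (2 * p ^ j)) ^ (c + t * d)).val [MOD p ^ n] :=
        Nat.ModEq.of_dvd (dvd_mul_left _ 2) (Nat.mod_modEq _ _)
    _ = p ^ (n - j) * (2 * (((g : ℕ) : ZMod (2 * p ^ j)) ^ (c + t * d)).val) := by ring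
    _ ≡ p ^ (n - j) * (((g : ℕ) : ZMod (p ^ j)) ^ (u + c + t * d)).val [MOD p ^ n] := by
        have h3 := Nat.ModEq.mul_left' (p ^ (n - j)) h2v
        rwa [hpow] at h3

lemma Dset_inter {m g d e : ℕ} (hord : orderOf ((g : ℕ) : ZMod m) = e * d)
    (he : 0 < e) (hd : 0 < d) {c1 c2 : ℕ} {x : ZMod m}
    (h1 : x ∈ Dset m g d e c1) (h2 : x ∈ Dset m g d e c2) : c1 % d = c2 % d := by
  obtain ⟨k1, hk1, rfl⟩ := (mem_Dset_iff hord he hd).1 h1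
  obtain ⟨k2, hk2, heq⟩ := (mem_Dset_iff hord he hd).1 h2
  rw [aux_pow_iff hord (Nat.mul_pos he hd)] at heq
  have := Nat.ModEq.of_dvd (dvd_mul_left d e) heq
  rw [Nat.ModEq] at this
  omega

lemma Dset_cast_mem {m q g d e c : ℕ} (h : q ∣ m) {x : ZMod m}
    (hx : x ∈ Dset m g d e c) :
    (ZMod.castHom h (ZMod q)) x ∈ Dset q g d e c := by
  rw [Dset, Finset.mem_image] at hx ⊢
  obtain ⟨t, ht, rfl⟩ := hx
  exact ⟨t, ht, by rw [map_pow, map_natCast]⟩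

lemma pieceA_elim (p e f n g : ℕ) (hp : p.Prime) (hodd : Odd p)
    (hef : p - 1 = e * f) (he : 0 < e) (hf : 0 < f)
    (hg : orderOf ((g : ℕ) : ZMod (2 * p ^ n)) = Nat.totient (2 * p ^ n))
    (j : ℕ) (hj1 : 1 ≤ j) (hjn : j ≤ n) (c : ℕ) {t : ZMod (2 * p ^ n)}
    (ht : t ∈ (Dset (2 * p ^ j) g (p ^ (j - 1) * f) e c).image
        (fun x => ((p ^ (n - j) * x.val : ℕ) : ZMod (2 * p ^ n)))) :
    ∃ x ∈ Dset (2 * p ^ j) g (p ^ (j - 1) * f) e c,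
      t.val = p ^ (n - j) * x.val ∧ x.val % 2 = 1 ∧ ¬ p ∣ x.val ∧ 0 < x.val := by
  have hp0 : 0 < p := hp.pos
  have hp1 : 1 < p := hp.one_lt
  haveI : NeZero (2 * p ^ n) := ⟨by positivity⟩
  haveI : NeZero (2 * p ^ j) := ⟨by positivity⟩
  set d := p ^ (j - 1) * f with hd_def
  have hd : 0 < d := by positivity
  have htot1 : Nat.totient (p ^ j) = e * d := by
    rw [Nat.totient_prime_pow hp hj1, hef, hd_def]; ring
  have htot2 : Nat.totient (2 * p ^ j) = e * d := by
    rw [Nat.totient_mul (Nat.Coprime.pow_right _ (Nat.coprime_two_left.mpr hodd)),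
      Nat.totient_two, one_mul, htot1]
  have hord2 : orderOf ((g : ℕ) : ZMod (2 * p ^ j)) = e * d :=
    htot2 ▸ aux_orderOf_cast (mul_dvd_mul_left 2 (pow_dvd_pow p hjn)) hg
  have hpow : p ^ (n - j) * p ^ j = p ^ n := by
    rw [← pow_add]; congr 1; omega
  rw [Finset.mem_image] at ht
  obtain ⟨x, hx, rfl⟩ := ht
  have hcop : Nat.Coprime x.val (2 * p ^ j) := Dset_coprime hord2 he hd hx
  have hodd' : x.val % 2 = 1 :=
    Nat.odd_iff.mp (hcop.coprime_dvd_right (dvd_mul_right 2 _)).odd_of_right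
  have hnp : ¬ p ∣ x.val := by
    intro hdvd
    have hpd : p ∣ 2 * p ^ j := Dvd.dvd.mul_left (dvd_pow_self p (by omega)) 2
    have h1 : p ∣ 1 := hcop ▸ Nat.dvd_gcd hdvd hpd
    have := Nat.dvd_one.mp h1
    omega
  have hxpos : 0 < x.val := by
    rcases Nat.eq_zero_or_pos x.val with h0 | h
    · exfalso
      rw [h0, Nat.coprime_zero_left] at hcop
      have : 0 < p ^ j := by positivity
      omega
    · exact h
  refine ⟨x, hx, ?_, hodd', hnp, hxpos⟩
  rw [ZMod.val_natCast, Nat.mod_eq_of_lt]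
  calc p ^ (n - j) * x.val < p ^ (n - j) * (2 * p ^ j) :=
        (Nat.mul_lt_mul_left (a := p ^ (n - j)) (by positivity)).2 (ZMod.val_lt x)
    _ = 2 * p ^ n := by rw [← hpow]; ring

lemma pieceB_elim (p e f n g : ℕ) (hp : p.Prime) (hodd : Odd p)
    (hef : p - 1 = e * f) (he : 0 < e) (hf : 0 < f)
    (hg : orderOf ((g : ℕ) : ZMod (2 * p ^ n)) = Nat.totient (2 * p ^ n))
    (j : ℕ) (hj1 : 1 ≤ j) (hjn : j ≤ n) (c : ℕ) {t : ZMod (2 * p ^ n)}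
    (ht : t ∈ (Dset (2 * p ^ j) g (p ^ (j - 1) * f) e c).image
        (fun x => ((2 * p ^ (n - j) * x.val : ℕ) : ZMod (2 * p ^ n)))) :
    ∃ x ∈ Dset (2 * p ^ j) g (p ^ (j - 1) * f) e c,
      t.val = 2 * (p ^ (n - j) * (x.val % p ^ j)) ∧ 0 < x.val % p ^ j ∧
      ¬ p ∣ (x.val % p ^ j) := by
  have hp0 : 0 < p := hp.pos
  have hp1 : 1 < p := hp.one_lt
  haveI : NeZero (2 * p ^ n) := ⟨by positivity⟩
  haveI : NeZero (2 * p ^ j) := ⟨by positivity⟩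
  set d := p ^ (j - 1) * f with hd_def
  have hd : 0 < d := by positivity
  have htot1 : Nat.totient (p ^ j) = e * d := by
    rw [Nat.totient_prime_pow hp hj1, hef, hd_def]; ring
  have htot2 : Nat.totient (2 * p ^ j) = e * d := by
    rw [Nat.totient_mul (Nat.Coprime.pow_right _ (Nat.coprime_two_left.mpr hodd)),
      Nat.totient_two, one_mul, htot1]
  have hord2 : orderOf ((g : ℕ) : ZMod (2 * p ^ j)) = e * d :=
    htot2 ▸ aux_orderOf_cast (mul_dvd_mul_left 2 (pow_dvd_pow p hjn)) hg
  have hpow : p ^ (n - j) * p ^ j = p ^ n := by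
    rw [← pow_add]; congr 1; omega
  rw [Finset.mem_image] at ht
  obtain ⟨x, hx, rfl⟩ := ht
  have hcop : Nat.Coprime x.val (2 * p ^ j) := Dset_coprime hord2 he hd hx
  have hnp : ¬ p ∣ x.val := by
    intro hdvd
    have hpd : p ∣ 2 * p ^ j := Dvd.dvd.mul_left (dvd_pow_self p (by omega)) 2
    have h1 : p ∣ 1 := hcop ▸ Nat.dvd_gcd hdvd hpd
    have := Nat.dvd_one.mp h1
    omega
  have hnpr : ¬ p ∣ (x.val % p ^ j) := by
    intro hdvd
    apply hnp
    have h1 : p ∣ p ^ j * (x.val / p ^ j) :=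
      Dvd.dvd.mul_right (dvd_pow_self p (by omega)) _
    rw [← Nat.div_add_mod x.val (p ^ j)]
    exact Nat.dvd_add h1 hdvd
  have hrpos : 0 < x.val % p ^ j := by
    rcases Nat.eq_zero_or_pos (x.val % p ^ j) with h0 | h
    · exact absurd (h0 ▸ dvd_zero p) hnpr
    · exact h
  refine ⟨x, hx, ?_, hrpos, hnpr⟩
  have e1 := Nat.div_add_mod x.val (p ^ j)
  have hval : 2 * p ^ (n - j) * x.val
      = 2 * p ^ n * (x.val / p ^ j) + 2 * (p ^ (n - j) * (x.val % p ^ j)) := by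
    calc 2 * p ^ (n - j) * x.val
        = 2 * p ^ (n - j) * (p ^ j * (x.val / p ^ j) + x.val % p ^ j) := by rw [e1]
      _ = 2 * p ^ n * (x.val / p ^ j) + 2 * (p ^ (n - j) * (x.val % p ^ j)) := by
          rw [← hpow]; ring
  rw [ZMod.val_natCast, hval, Nat.mul_add_mod, Nat.mod_eq_of_lt]
  calc 2 * (p ^ (n - j) * (x.val % p ^ j)) < 2 * (p ^ (n - j) * p ^ j) := by
        have := Nat.mod_lt x.val (y := p ^ j) (by positivity)
        exact (Nat.mul_lt_mul_left (by norm_num)).2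
          ((Nat.mul_lt_mul_left (a := p ^ (n - j)) (by positivity)).2 this)
    _ = 2 * p ^ n := by rw [hpow]

/-- For every `a`, `S(α_n^a) = 1 + T_b^{(p^n)}(α_n^a) + T_{b+u}^{(p^n)}(α_n^a)`. -/
theorem stmt10 (p e f n g b u : ℕ) (hp : p.Prime) (hodd : Odd p) (hpef : p = e * f + 1)
    (he : 0 < e) (hf : 0 < f) (hfe : Even f) (hn : 1 ≤ n) (hgodd : Odd g)
    (hg : orderOf (g : ZMod (2 * p ^ n)) = Nat.totient (2 * p ^ n))
    (hw : (2 : ZMod (p ^ 2)) ^ (p - 1) ≠ 1)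
    (hb : b < p ^ (n - 1) * f)
    (hu : (2 : ZMod (p ^ n)) = (g : ZMod (p ^ n)) ^ u)
    (α : AlgebraicClosure (ZMod 2)) (hα : IsPrimitiveRoot α (p ^ n)) :
    ∀ a : ZMod (p ^ n),
      Seval p g e f b n (α ^ a.val) =
        1 + Tsum p g e f n b (α ^ a.val) + Tsum p g e f n (b + u) (α ^ a.val) := by
  intro a
  have hp0 : 0 < p := hp.pos
  have hp1 : 1 < p := hp.one_lt
  have hef : p - 1 = e * f := by omega
  haveI : NeZero (2 * p ^ n) := ⟨by positivity⟩
  set β := α ^ a.val with hβdef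
  have hβ : β ^ p ^ n = 1 := by
    rw [hβdef, ← pow_mul, mul_comm, pow_mul, hα.pow_eq_one, one_pow]
  have hord2 : ∀ j, 1 ≤ j → j ≤ n →
      orderOf ((g : ℕ) : ZMod (2 * p ^ j)) = e * (p ^ (j - 1) * f) := by
    intro j hj1 hjn
    have htot1 : Nat.totient (p ^ j) = e * (p ^ (j - 1) * f) := by
      rw [Nat.totient_prime_pow hp hj1, hef]; ring
    have htot2 : Nat.totient (2 * p ^ j) = e * (p ^ (j - 1) * f) := by
      rw [Nat.totient_mul (Nat.Coprime.pow_right _ (Nat.coprime_two_left.mpr hodd)),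
        Nat.totient_two, one_mul, htot1]
    exact htot2 ▸ aux_orderOf_cast (mul_dvd_mul_left 2 (pow_dvd_pow p hjn)) hg
  have hord1 : ∀ j, 1 ≤ j → j ≤ n →
      orderOf ((g : ℕ) : ZMod (p ^ j)) = e * (p ^ (j - 1) * f) := by
    intro j hj1 hjn
    have htot1 : Nat.totient (p ^ j) = e * (p ^ (j - 1) * f) := by
      rw [Nat.totient_prime_pow hp hj1, hef]; ring
    exact htot1 ▸ aux_orderOf_cast ((pow_dvd_pow p hjn).trans (dvd_mul_left _ 2)) hg
  have huj : ∀ j, j ≤ n → (2 : ZMod (p ^ j)) = ((g : ℕ) : ZMod (p ^ j)) ^ u := by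
    intro j hjn
    have h2 := congrArg (ZMod.castHom (pow_dvd_pow p hjn) (ZMod (p ^ j))) hu
    rwa [map_pow, map_natCast, map_ofNat] at h2
  have hAB : ∀ j, 1 ≤ j → j ≤ n → ∀ c1 c2 : ℕ, ∀ t : ZMod (2 * p ^ n),
      t ∈ (Dset (2 * p ^ j) g (p ^ (j - 1) * f) e c1).image
        (fun x => ((p ^ (n - j) * x.val : ℕ) : ZMod (2 * p ^ n))) →
      t ∈ (Dset (2 * p ^ j) g (p ^ (j - 1) * f) e c2).image
        (fun x => ((2 * p ^ (n - j) * x.val : ℕ) : ZMod (2 * p ^ n))) → False := by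
    intro j hj1 hjn c1 c2 t h1 h2
    obtain ⟨x1, _, hv1, ho1, _, _⟩ := pieceA_elim p e f n g hp hodd hef he hf hg j hj1 hjn c1 h1
    obtain ⟨x2, _, hv2, _, _⟩ := pieceB_elim p e f n g hp hodd hef he hf hg j hj1 hjn c2 h2
    have hpodd : p ^ (n - j) % 2 = 1 := Nat.odd_iff.mp hodd.pow
    have h1' : t.val % 2 = 1 := by rw [hv1, Nat.mul_mod, hpodd, ho1]
    have h2' : t.val % 2 = 0 := by rw [hv2]; omega
    omega
  have hshape : ∀ j, 1 ≤ j → j ≤ n → ∀ t : ZMod (2 * p ^ n),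
      t ∈ (Finset.range (p ^ (j - 1) * f / 2)).biUnion (fun i =>
        (Dset (2 * p ^ j) g (p ^ (j - 1) * f) e ((i + b) % (p ^ (j - 1) * f))).image
            (fun x => ((p ^ (n - j) * x.val : ℕ) : ZMod (2 * p ^ n))) ∪
          (Dset (2 * p ^ j) g (p ^ (j - 1) * f) e ((i + b) % (p ^ (j - 1) * f))).image
            (fun x => ((2 * p ^ (n - j) * x.val : ℕ) : ZMod (2 * p ^ n)))) →
      ∃ w, 0 < w ∧ ¬ p ∣ w ∧ t.val = p ^ (n - j) * w := by
    intro j hj1 hjn t ht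
    obtain ⟨i, _, ht⟩ := Finset.mem_biUnion.1 ht
    rcases Finset.mem_union.1 ht with h | h
    · obtain ⟨x, _, hval, _, hnp, hxpos⟩ :=
        pieceA_elim p e f n g hp hodd hef he hf hg j hj1 hjn _ h
      exact ⟨x.val, hxpos, hnp, hval⟩
    · obtain ⟨x, _, hval, hrpos, hnpr⟩ :=
        pieceB_elim p e f n g hp hodd hef he hf hg j hj1 hjn _ h
      refine ⟨2 * (x.val % p ^ j), by omega, ?_, by rw [hval]; ring⟩
      intro hdvd
      rcases (Nat.Prime.dvd_mul hp).1 hdvd with h2 | hr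
      · have hle := Nat.le_of_dvd (by norm_num) h2
        have := Nat.odd_iff.mp hodd
        omega
      · exact hnpr hr
  have h0 : (0 : ZMod (2 * p ^ n)) ∉ (Finset.Icc 1 n).biUnion (fun j =>
      (Finset.range (p ^ (j - 1) * f / 2)).biUnion fun i =>
        (Dset (2 * p ^ j) g (p ^ (j - 1) * f) e ((i + b) % (p ^ (j - 1) * f))).image
            (fun x => ((p ^ (n - j) * x.val : ℕ) : ZMod (2 * p ^ n))) ∪
        (Dset (2 * p ^ j) g (p ^ (j - 1) * f) e ((i + b) % (p ^ (j - 1) * f))).image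
            (fun x => ((2 * p ^ (n - j) * x.val : ℕ) : ZMod (2 * p ^ n)))) := by
    intro h
    obtain ⟨j, hj, ht⟩ := Finset.mem_biUnion.1 h
    rw [Finset.mem_Icc] at hj
    obtain ⟨w, hw, _, hval⟩ := hshape j hj.1 hj.2 _ ht
    rw [ZMod.val_zero] at hval
    have : 0 < p ^ (n - j) * w := by positivity
    omega
  have hdisjJ : (↑(Finset.Icc 1 n) : Set ℕ).PairwiseDisjoint (fun j =>
      (Finset.range (p ^ (j - 1) * f / 2)).biUnion fun i =>
        (Dset (2 * p ^ j) g (p ^ (j - 1) * f) e ((i + b) % (p ^ (j - 1) * f))).image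
            (fun x => ((p ^ (n - j) * x.val : ℕ) : ZMod (2 * p ^ n))) ∪
        (Dset (2 * p ^ j) g (p ^ (j - 1) * f) e ((i + b) % (p ^ (j - 1) * f))).image
            (fun x => ((2 * p ^ (n - j) * x.val : ℕ) : ZMod (2 * p ^ n)))) := by
    intro j1 hj1 j2 hj2 hne
    rw [Finset.coe_Icc, Set.mem_Icc] at hj1 hj2
    rw [Function.onFun, Finset.disjoint_left]
    intro t ht1 ht2
    obtain ⟨w1, hw1, hnp1, hv1⟩ := hshape j1 hj1.1 hj1.2 t ht1
    obtain ⟨w2, hw2, hnp2, hv2⟩ := hshape j2 hj2.1 hj2.2 t ht2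
    have key : ∀ a b : ℕ, a < b → b ≤ n → ∀ wa wb : ℕ, ¬ p ∣ wa → ¬ p ∣ wb →
        p ^ (n - a) * wa = p ^ (n - b) * wb → False := by
      intro a b hab hbn wa wb hna hnb hEq
      apply hnb
      have h1 : p ^ (n - b) * (p ^ (b - a) * wa) = p ^ (n - b) * wb := by
        rw [← mul_assoc, ← pow_add, ← hEq]
        congr 2
        omega
      have h2 := Nat.eq_of_mul_eq_mul_left (n := p ^ (n - b)) (by positivity) h1
      rw [← h2]
      exact Dvd.dvd.mul_right (dvd_pow_self p (by omega)) _
    rcases Nat.lt_or_ge j1 j2 with h | h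
    · exact key j1 j2 h hj2.2 w1 w2 hnp1 hnp2 (by rw [← hv1]; exact hv2)
    · have h' : j2 < j1 := by omega
      exact key j2 j1 h' hj1.2 w2 w1 hnp2 hnp1 (by rw [← hv2]; exact hv1)
  have hdisjI : ∀ j, 1 ≤ j → j ≤ n →
      (↑(Finset.range (p ^ (j - 1) * f / 2)) : Set ℕ).PairwiseDisjoint (fun i =>
        (Dset (2 * p ^ j) g (p ^ (j - 1) * f) e ((i + b) % (p ^ (j - 1) * f))).image
            (fun x => ((p ^ (n - j) * x.val : ℕ) : ZMod (2 * p ^ n))) ∪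
        (Dset (2 * p ^ j) g (p ^ (j - 1) * f) e ((i + b) % (p ^ (j - 1) * f))).image
            (fun x => ((2 * p ^ (n - j) * x.val : ℕ) : ZMod (2 * p ^ n)))) := by
    intro j hj1 hjn i1 hi1 i2 hi2 hne
    rw [Finset.coe_range, Set.mem_Iio] at hi1 hi2
    rw [Function.onFun, Finset.disjoint_left]
    intro t ht1 ht2
    have hd : 0 < p ^ (j - 1) * f := by positivity
    haveI : NeZero (2 * p ^ j) := ⟨by positivity⟩
    haveI : NeZero (p ^ j) := ⟨by positivity⟩
    have hdvd21 : (p ^ j) ∣ (2 * p ^ j) := dvd_mul_left _ 2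
    apply hne
    have hcc : ((i1 + b) % (p ^ (j - 1) * f)) % (p ^ (j - 1) * f)
        = ((i2 + b) % (p ^ (j - 1) * f)) % (p ^ (j - 1) * f) := by
      rcases Finset.mem_union.1 ht1 with hA1 | hB1 <;>
        rcases Finset.mem_union.1 ht2 with hA2 | hB2
      · obtain ⟨x1, hx1, hv1, _, _, _⟩ :=
          pieceA_elim p e f n g hp hodd hef he hf hg j hj1 hjn _ hA1
        obtain ⟨x2, hx2, hv2, _, _, _⟩ :=
          pieceA_elim p e f n g hp hodd hef he hf hg j hj1 hjn _ hA2
        have hvv : x1.val = x2.val :=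
          Nat.eq_of_mul_eq_mul_left (n := p ^ (n - j)) (by positivity)
            (by rw [← hv1]; exact hv2)
        have hx12 : x1 = x2 := ZMod.val_injective _ hvv
        exact Dset_inter (hord2 j hj1 hjn) he hd (hx12 ▸ hx1) hx2
      · exact (hAB j hj1 hjn _ _ t hA1 hB2).elim
      · exact (hAB j hj1 hjn _ _ t hA2 hB1).elim
      · obtain ⟨x1, hx1, hv1, _, _⟩ :=
          pieceB_elim p e f n g hp hodd hef he hf hg j hj1 hjn _ hB1
        obtain ⟨x2, hx2, hv2, _, _⟩ :=
          pieceB_elim p e f n g hp hodd hef he hf hg j hj1 hjn _ hB2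
        have hr12 : x1.val % p ^ j = x2.val % p ^ j := by
          have h1 : 2 * (p ^ (n - j) * (x1.val % p ^ j))
              = 2 * (p ^ (n - j) * (x2.val % p ^ j)) := by rw [← hv1]; exact hv2
          have h2 := Nat.eq_of_mul_eq_mul_left (n := 2) (by norm_num) h1
          exact Nat.eq_of_mul_eq_mul_left (n := p ^ (n - j)) (by positivity) h2
        have hcast : (ZMod.castHom hdvd21 (ZMod (p ^ j))) x1
            = (ZMod.castHom hdvd21 (ZMod (p ^ j))) x2 := by
          rw [ZMod.castHom_apply, ZMod.castHom_apply, ← ZMod.natCast_val, ← ZMod.natCast_val,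
            ← cast_mod_dvd x1.val (p ^ j) (p ^ j) dvd_rfl,
            ← cast_mod_dvd x2.val (p ^ j) (p ^ j) dvd_rfl, hr12]
        exact Dset_inter (hord1 j hj1 hjn) he hd
          (hcast ▸ Dset_cast_mem hdvd21 hx1) (Dset_cast_mem hdvd21 hx2)
    rw [Nat.mod_mod_of_dvd _ dvd_rfl, Nat.mod_mod_of_dvd _ dvd_rfl] at hcc
    have h2 : i1 % (p ^ (j - 1) * f) = i2 % (p ^ (j - 1) * f) :=
      Nat.ModEq.add_right_cancel' b hcc
    have hle : p ^ (j - 1) * f / 2 ≤ p ^ (j - 1) * f := Nat.div_le_self _ _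
    rwa [Nat.mod_eq_of_lt (by omega), Nat.mod_eq_of_lt (by omega)] at h2
  simp only [Seval, Cone]
  rw [Finset.sum_insert h0, Finset.sum_biUnion hdisjJ]
  have hkey : ∀ j ∈ Finset.Icc 1 n,
      (∑ t ∈ (Finset.range (p ^ (j - 1) * f / 2)).biUnion (fun i =>
        (Dset (2 * p ^ j) g (p ^ (j - 1) * f) e ((i + b) % (p ^ (j - 1) * f))).image
            (fun x => ((p ^ (n - j) * x.val : ℕ) : ZMod (2 * p ^ n))) ∪
        (Dset (2 * p ^ j) g (p ^ (j - 1) * f) e ((i + b) % (p ^ (j - 1) * f))).image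
            (fun x => ((2 * p ^ (n - j) * x.val : ℕ) : ZMod (2 * p ^ n)))), β ^ t.val)
      = Hsum p g e f j b (β ^ p ^ (n - j)) + Hsum p g e f j (b + u) (β ^ p ^ (n - j)) := by
    intro j hj
    rw [Finset.mem_Icc] at hj
    rw [Finset.sum_biUnion (hdisjI j hj.1 hj.2)]
    simp only [Hsum]
    rw [← Finset.sum_add_distrib]
    refine Finset.sum_congr rfl fun i hi => ?_
    rw [Finset.sum_union (Finset.disjoint_left.2
      (fun {t} h1 h2 => (hAB j hj.1 hj.2 _ _ t h1 h2).elim))]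
    have hcidx : ((i + (b + u)) % (p ^ (j - 1) * f)) % (p ^ (j - 1) * f)
        = (u + ((i + b) % (p ^ (j - 1) * f))) % (p ^ (j - 1) * f) := by
      rw [Nat.mod_mod_of_dvd _ dvd_rfl]
      have h1 : u + (i + b) % (p ^ (j - 1) * f) ≡ u + (i + b) [MOD p ^ (j - 1) * f] :=
        Nat.ModEq.add_left u (Nat.mod_modEq _ _)
      rw [show i + (b + u) = u + (i + b) by ring]
      exact (Nat.ModEq.symm h1)
    rw [sumA p e f n g hp hodd hef he hf hg β hβ j hj.1 hj.2 ((i + b) % (p ^ (j - 1) * f)),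
      sumB p e f n g u hp hodd hef he hf hg β hβ j hj.1 hj.2 (huj j hj.2)
        ((i + b) % (p ^ (j - 1) * f)) ((i + (b + u)) % (p ^ (j - 1) * f)) hcidx]
  rw [Finset.sum_congr rfl hkey, Finset.sum_add_distrib]
  simp only [Tsum]
  rw [ZMod.val_zero, pow_zero]
  ring
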